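/- arXiv:1705.03660 — 4 statements merged into one kernel-verified Lean document; each statement's English description precedes it below -/
import Mathlib

section
/- Let f be meromorphic on 𝔻 with f(z) = 1/(z-p) + ∑_{n=0}^∞ b_n zⁿ, 0 ≤ p < 1, and suppose the coefficients satisfy ∑_{n=1}^∞ n|b_n|² ≤ 1/(1-p²)². Then for all z ∈ 𝔻 with z ≠ p, |f′(z) + 1/(z-p)²| ≤ 1/((1-p²)(1-|z|²)). -/
open Metric

private lemma amgm_sqrt {x y : ℝ} (hx : 0 ≤ x) (hy : 0 ≤ y) :
    Real.sqrt x * Real.sqrt y ≤ (x + y) / 2 := by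
  nlinarith [sq_nonneg (Real.sqrt x - Real.sqrt y), Real.sq_sqrt hx, Real.sq_sqrt hy]

private lemma sqrt_mul_sqrt_summable {x y : ℕ → ℝ} (hx0 : ∀ n, 0 ≤ x n) (hy0 : ∀ n, 0 ≤ y n)
    (hx : Summable x) (hy : Summable y) :
    Summable (fun n => Real.sqrt (x n) * Real.sqrt (y n)) :=
  Summable.of_nonneg_of_le (fun n => mul_nonneg (Real.sqrt_nonneg _) (Real.sqrt_nonneg _))
    (fun n => amgm_sqrt (hx0 n) (hy0 n)) ((hx.add hy).div_const 2)

private lemma tsum_sqrt_mul_sqrt_le {x y : ℕ → ℝ} (hx0 : ∀ n, 0 ≤ x n) (hy0 : ∀ n, 0 ≤ y n)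
    (hx : Summable x) (hy : Summable y) :
    ∑' n, Real.sqrt (x n) * Real.sqrt (y n) ≤
      Real.sqrt (∑' n, x n) * Real.sqrt (∑' n, y n) := by
  refine Summable.tsum_le_of_sum_le (sqrt_mul_sqrt_summable hx0 hy0 hx hy) (fun s => ?_)
  have hxs : (0:ℝ) ≤ ∑ n ∈ s, x n := Finset.sum_nonneg fun n _ => hx0 n
  have hys : (0:ℝ) ≤ ∑ n ∈ s, y n := Finset.sum_nonneg fun n _ => hy0 n
  have h1 : ∑ n ∈ s, Real.sqrt (x n) * Real.sqrt (y n) ≤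
      Real.sqrt ((∑ n ∈ s, x n) * ∑ n ∈ s, y n) := by
    rw [Real.le_sqrt (Finset.sum_nonneg fun n _ =>
      mul_nonneg (Real.sqrt_nonneg _) (Real.sqrt_nonneg _)) (mul_nonneg hxs hys)]
    calc (∑ n ∈ s, Real.sqrt (x n) * Real.sqrt (y n)) ^ 2
        ≤ (∑ n ∈ s, Real.sqrt (x n) ^ 2) * ∑ n ∈ s, Real.sqrt (y n) ^ 2 :=
          Finset.sum_mul_sq_le_sq_mul_sq s _ _
      _ = (∑ n ∈ s, x n) * ∑ n ∈ s, y n := by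
          congr 1 <;> exact Finset.sum_congr rfl fun n _ => Real.sq_sqrt (by first
            | exact hx0 n | exact hy0 n)
  refine h1.trans ?_
  rw [Real.sqrt_mul hxs]
  exact mul_le_mul (Real.sqrt_le_sqrt (Summable.sum_le_tsum s (fun n _ => hx0 n) hx))
    (Real.sqrt_le_sqrt (Summable.sum_le_tsum s (fun n _ => hy0 n) hy)) (Real.sqrt_nonneg _)
    (Real.sqrt_nonneg _)

/-- `∑ n t^(n-1) = 1/(1-t)²` for `0 ≤ t < 1` (natural subtraction; the `n = 0` term is `0`). -/
private lemma hasSum_n_mul_pow {t : ℝ} (h1 : |t| < 1) :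
    HasSum (fun n : ℕ => (n : ℝ) * t ^ (n - 1)) (1 / (1 - t) ^ 2) := by
  have ht : ‖t‖ < 1 := by rwa [Real.norm_eq_abs]
  have hA : HasSum (fun m : ℕ => ((m : ℝ) + 1) * t ^ m)
      (t / (1 - t) ^ 2 + 1 / (1 - t)) := by
    have := (hasSum_coe_mul_geometric_of_norm_lt_one ht).add
      (hasSum_geometric_of_norm_lt_one ht)
    · convert this using 2 with m
      · rfl
      · ring
      · rw [one_div]
  have key : HasSum (fun m : ℕ => ((m + 1 : ℕ) : ℝ) * t ^ ((m + 1) - 1))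
      (t / (1 - t) ^ 2 + 1 / (1 - t)) := by
    convert hA using 2 with m
    push_cast
    ring_nf
  rw [hasSum_nat_add_iff (f := fun n : ℕ => (n : ℝ) * t ^ (n - 1)) 1] at key
  have ht1 : (1 : ℝ) - t ≠ 0 := by
    intro h; rw [sub_eq_zero] at h; rw [← h] at h1; simp at h1
  convert key using 1
  · rfl
  simp only [Finset.range_one, Finset.sum_singleton, Nat.cast_zero, zero_mul, add_zero]
  field_simp
  ring

theorem stmt_9 (p : ℝ) (hp0 : 0 ≤ p) (hp1 : p < 1) (f : ℂ → ℂ) (b : ℕ → ℂ)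
    (hfdiff : DifferentiableOn ℂ f (ball (0 : ℂ) 1 \ {(p : ℂ)}))
    (hf : ∀ z ∈ ball (0 : ℂ) 1, z ≠ (p : ℂ) →
      f z = 1 / (z - p) + ∑' n : ℕ, b n * z ^ n)
    (hb : Summable (fun n : ℕ => (n : ℝ) * ‖b n‖ ^ 2))
    (hbound : ∑' n : ℕ, (n : ℝ) * ‖b n‖ ^ 2 ≤ 1 / (1 - p ^ 2) ^ 2) :
    ∀ z ∈ ball (0 : ℂ) 1, z ≠ (p : ℂ) →
      ‖deriv f z + 1 / (z - p) ^ 2‖ ≤ 1 / ((1 - p ^ 2) * (1 - ‖z‖ ^ 2)) := by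
  intro z hz hzp
  have hz1 : ‖z‖ < 1 := by simpa [Complex.dist_eq] using hz
  have hz0 : (0:ℝ) ≤ ‖z‖ := norm_nonneg z
  have hp2 : (0:ℝ) < 1 - p ^ 2 := by nlinarith
  have ht1 : (0:ℝ) < 1 - ‖z‖ ^ 2 := by nlinarith
  -- radius of auxiliary ball
  set r : ℝ := (‖z‖ + 1) / 2 with hr
  have hzr : ‖z‖ < r := by rw [hr]; linarith
  have hr0 : (0:ℝ) < r := lt_of_le_of_lt hz0 hzr
  have hr1 : r < 1 := by rw [hr]; linarith
  -- coefficient bound: n * ‖b n‖² ≤ 1/(1-p²)²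
  have hbn : ∀ n : ℕ, (n : ℝ) * ‖b n‖ ^ 2 ≤ 1 / (1 - p ^ 2) ^ 2 := fun n =>
    (Summable.le_tsum hb n (fun m _ => mul_nonneg (Nat.cast_nonneg m) (sq_nonneg _))).trans hbound
  -- derivative series terms
  set g' : ℕ → ℂ → ℂ := fun n y => (n : ℂ) * b n * y ^ (n - 1) with hg'def
  -- key norm identity
  have hnorm : ∀ (n : ℕ) (y : ℂ), ‖g' n y‖ =
      Real.sqrt ((n : ℝ) * ‖b n‖ ^ 2) * Real.sqrt ((n : ℝ) * (‖y‖ ^ 2) ^ (n - 1)) := by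
    intro n y
    have h1 : Real.sqrt ((n : ℝ) * ‖b n‖ ^ 2) = Real.sqrt n * ‖b n‖ := by
      rw [Real.sqrt_mul (Nat.cast_nonneg n), Real.sqrt_sq (norm_nonneg _)]
    have h2 : Real.sqrt ((n : ℝ) * (‖y‖ ^ 2) ^ (n - 1)) = Real.sqrt n * ‖y‖ ^ (n - 1) := by
      rw [← pow_mul, mul_comm 2 (n-1), pow_mul,
        Real.sqrt_mul (Nat.cast_nonneg n), Real.sqrt_sq (pow_nonneg (norm_nonneg y) _)]
    rw [h1, h2, hg'def]
    simp only [norm_mul, norm_pow, Complex.norm_natCast]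
    rw [show Real.sqrt n * ‖b n‖ * (Real.sqrt n * ‖y‖ ^ (n-1)) =
      (Real.sqrt n * Real.sqrt n) * (‖b n‖ * ‖y‖ ^ (n-1)) by ring,
      Real.mul_self_sqrt (Nat.cast_nonneg n)]
    ring
  -- summability of geometric-derivative series for any 0 ≤ t < 1
  have hgeo : ∀ t : ℝ, 0 ≤ t → t < 1 →
      HasSum (fun n : ℕ => (n : ℝ) * t ^ (n - 1)) (1 / (1 - t) ^ 2) := by
    intro t h0 h1'
    exact hasSum_n_mul_pow (by rw [abs_of_nonneg h0]; exact h1')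
  have hr2 : (0:ℝ) ≤ r ^ 2 := sq_nonneg r
  have hr21 : r ^ 2 < 1 := by nlinarith
  have hsum_r : Summable (fun n : ℕ => (n : ℝ) * (r ^ 2) ^ (n - 1)) :=
    (hgeo _ hr2 hr21).summable
  -- the bound function u
  set u : ℕ → ℝ := fun n =>
    Real.sqrt ((n : ℝ) * ‖b n‖ ^ 2) * Real.sqrt ((n : ℝ) * (r ^ 2) ^ (n - 1)) with hu
  have hx0 : ∀ n : ℕ, (0:ℝ) ≤ (n : ℝ) * ‖b n‖ ^ 2 :=
    fun n => mul_nonneg (Nat.cast_nonneg n) (sq_nonneg _)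
  have hy0r : ∀ n : ℕ, (0:ℝ) ≤ (n : ℝ) * (r ^ 2) ^ (n - 1) :=
    fun n => mul_nonneg (Nat.cast_nonneg n) (pow_nonneg hr2 _)
  have husum : Summable u := sqrt_mul_sqrt_summable hx0 hy0r hb hsum_r
  -- termwise derivative
  have hderiv : ∀ (n : ℕ) (y : ℂ), HasDerivAt (fun w => b n * w ^ n) (g' n y) y := by
    intro n y
    have := (hasDerivAt_pow n y).const_mul (b n)
    convert this using 1
    · rfl
    · rfl
    rw [hg'def]; ring
  -- bound on derivative terms inside ball 0 r
  have hbound' : ∀ (n : ℕ) (y : ℂ), y ∈ ball (0:ℂ) r → ‖g' n y‖ ≤ u n := by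
    intro n y hy
    have hyr : ‖y‖ ≤ r := by
      have : ‖y‖ < r := by simpa [Complex.dist_eq] using hy
      exact this.le
    rw [hnorm n y, hu]
    refine mul_le_mul_of_nonneg_left (Real.sqrt_le_sqrt ?_) (Real.sqrt_nonneg _)
    exact mul_le_mul_of_nonneg_left
      (pow_le_pow_left₀ (sq_nonneg _) (by nlinarith [norm_nonneg y] : ‖y‖ ^ 2 ≤ r ^ 2) _)
      (Nat.cast_nonneg n)
  -- series converges at 0
  have hg0 : Summable (fun n : ℕ => b n * (0:ℂ) ^ n) := by
    apply summable_of_ne_finset_zero (s := {0})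
    intro n hn
    simp only [Finset.mem_singleton] at hn
    rw [zero_pow hn, mul_zero]
  -- derivative of the tsum at z
  have hzball : z ∈ ball (0:ℂ) r := by simpa [Complex.dist_eq] using hzr
  have h0ball : (0:ℂ) ∈ ball (0:ℂ) r := by simpa using hr0
  have hgd : HasDerivAt (fun w : ℂ => ∑' n : ℕ, b n * w ^ n) (∑' n : ℕ, g' n z) z :=
    hasDerivAt_tsum_of_isPreconnected husum isOpen_ball (convex_ball _ _).isPreconnected
      (fun n y _ => hderiv n y) hbound' h0ball hg0 hzball
  -- full local function
  have hzsub : z - (p:ℂ) ≠ 0 := sub_ne_zero.mpr hzp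
  have hinv : HasDerivAt (fun w : ℂ => 1 / (w - p)) (-(1 / (z - p) ^ 2)) z := by
    have := ((hasDerivAt_id z).sub_const (p:ℂ)).inv hzsub
    simpa [one_div, neg_div, Pi.inv_def] using this
  have hh : HasDerivAt (fun w : ℂ => 1 / (w - p) + ∑' n : ℕ, b n * w ^ n)
      (-(1 / (z - p) ^ 2) + ∑' n : ℕ, g' n z) z := hinv.add hgd
  -- f agrees with h near z
  have hopen : IsOpen (ball (0:ℂ) 1 \ {(p:ℂ)}) := isOpen_ball.sdiff isClosed_singleton
  have hmem : z ∈ ball (0:ℂ) 1 \ {(p:ℂ)} := ⟨hz, hzp⟩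
  have heq : f =ᶠ[nhds z] (fun w : ℂ => 1 / (w - p) + ∑' n : ℕ, b n * w ^ n) := by
    filter_upwards [hopen.mem_nhds hmem] with w hw
    exact hf w hw.1 hw.2
  have hdf : deriv f z = -(1 / (z - p) ^ 2) + ∑' n : ℕ, g' n z := by
    rw [heq.deriv_eq, hh.deriv]
  rw [hdf]
  have hS : deriv f z + 1 / (z - p) ^ 2 = ∑' n : ℕ, g' n z := by rw [hdf]; ring
  rw [show -(1 / (z - ↑p) ^ 2) + (∑' n : ℕ, g' n z) + 1 / (z - ↑p) ^ 2
      = ∑' n : ℕ, g' n z by ring]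
  -- now bound ‖∑' g' n z‖
  have hy0z : ∀ n : ℕ, (0:ℝ) ≤ (n : ℝ) * (‖z‖ ^ 2) ^ (n - 1) :=
    fun n => mul_nonneg (Nat.cast_nonneg n) (pow_nonneg (sq_nonneg _) _)
  have hz21 : ‖z‖ ^ 2 < 1 := by nlinarith
  have hsum_z : Summable (fun n : ℕ => (n : ℝ) * (‖z‖ ^ 2) ^ (n - 1)) :=
    (hgeo _ (sq_nonneg _) hz21).summable
  have hsumnorm : Summable (fun n : ℕ => ‖g' n z‖) := by
    have := sqrt_mul_sqrt_summable hx0 hy0z hb hsum_z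
    apply this.congr
    intro n
    exact (hnorm n z).symm
  calc ‖∑' n : ℕ, g' n z‖ ≤ ∑' n : ℕ, ‖g' n z‖ := norm_tsum_le_tsum_norm hsumnorm
    _ = ∑' n : ℕ, Real.sqrt ((n : ℝ) * ‖b n‖ ^ 2) *
        Real.sqrt ((n : ℝ) * (‖z‖ ^ 2) ^ (n - 1)) := by
        exact tsum_congr fun n => hnorm n z
    _ ≤ Real.sqrt (∑' n : ℕ, (n : ℝ) * ‖b n‖ ^ 2) *
        Real.sqrt (∑' n : ℕ, (n : ℝ) * (‖z‖ ^ 2) ^ (n - 1)) :=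
        tsum_sqrt_mul_sqrt_le hx0 hy0z hb hsum_z
    _ ≤ Real.sqrt (1 / (1 - p ^ 2) ^ 2) * Real.sqrt (1 / (1 - ‖z‖ ^ 2) ^ 2) := by
        refine mul_le_mul (Real.sqrt_le_sqrt hbound) (le_of_eq ?_) (Real.sqrt_nonneg _)
          (Real.sqrt_nonneg _)
        rw [(hgeo _ (sq_nonneg _) hz21).tsum_eq]
    _ = 1 / ((1 - p ^ 2) * (1 - ‖z‖ ^ 2)) := by
        rw [one_div, one_div, Real.sqrt_inv, Real.sqrt_inv,
          Real.sqrt_sq hp2.le, Real.sqrt_sq ht1.le]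
        rw [one_div, mul_inv]
end

section
/- Let f be meromorphic on 𝔻 with expansion f(z) = 1/(z-p) + ∑_{n=0}^∞ b_n zⁿ, 0 ≤ p < 1, satisfying the strengthened area inequality ∑_{n=1}^∞ n|b_n|² ≤ k²/(1-p²)² for some 0 ≤ k < 1. Then |f′(z) + 1/(z-p)²| ≤ k/((1-p²)(1-|z|²)) for all z ∈ 𝔻, z ≠ p. -/
open Metric

/-- Summability of `n * r^(n-1)` for `0 ≤ r < 1`. -/
lemma aux_summable {r : ℝ} (h1 : |r| < 1) :
    Summable (fun n : ℕ => (n : ℝ) * r ^ (n - 1)) := by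
  rw [← summable_nat_add_iff 1]
  have h : Summable (fun n : ℕ => ((n : ℝ) ^ 1 * r ^ n) + r ^ n) :=
    ((summable_pow_mul_geometric_of_norm_lt_one 1 (by rwa [Real.norm_eq_abs])).add
      (summable_geometric_of_norm_lt_one (by rwa [Real.norm_eq_abs])))
  refine h.congr (fun n => ?_)
  push_cast
  ring_nf

lemma aux_tsum {r : ℝ} (h0 : 0 ≤ r) (h1 : r < 1) :
    ∑' n : ℕ, (n : ℝ) * r ^ (n - 1) = 1 / (1 - r) ^ 2 := by
  have habs : |r| < 1 := by rw [abs_of_nonneg h0]; exact h1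
  have hnorm : ‖r‖ < 1 := by rwa [Real.norm_eq_abs]
  have hsum := aux_summable habs
  rw [Summable.tsum_eq_zero_add hsum]
  have h2 : (fun n : ℕ => ((n + 1 : ℕ) : ℝ) * r ^ ((n + 1) - 1)) =
      (fun n : ℕ => (n : ℝ) * r ^ n + r ^ n) := by
    funext n; push_cast; ring_nf
  rw [h2, Summable.tsum_add ((summable_pow_mul_geometric_of_norm_lt_one 1 hnorm).congr
        (fun n => by ring)) (summable_geometric_of_norm_lt_one hnorm),
      tsum_coe_mul_geometric_of_norm_lt_one hnorm, tsum_geometric_of_lt_one h0 h1]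
  have hne : 1 - r ≠ 0 := by linarith
  field_simp
  ring

/-- Cauchy–Schwarz: product of square-summable nonneg sequences is summable. -/
lemma aux_cs_summable {a c : ℕ → ℝ} (ha : ∀ n, 0 ≤ a n) (hc : ∀ n, 0 ≤ c n)
    (h2a : Summable (fun n => a n ^ 2)) (h2c : Summable (fun n => c n ^ 2)) :
    Summable (fun n => a n * c n) := by
  refine Summable.of_nonneg_of_le (fun n => mul_nonneg (ha n) (hc n)) (fun n => ?_)
    ((h2a.add h2c).div_const 2)
  have := sq_nonneg (a n - c n)
  nlinarith [sq_nonneg (a n - c n)]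

lemma aux_cs_tsum {a c : ℕ → ℝ} (ha : ∀ n, 0 ≤ a n) (hc : ∀ n, 0 ≤ c n)
    (h2a : Summable (fun n => a n ^ 2)) (h2c : Summable (fun n => c n ^ 2)) :
    ∑' n, a n * c n ≤ Real.sqrt (∑' n, a n ^ 2) * Real.sqrt (∑' n, c n ^ 2) := by
  refine Summable.tsum_le_of_sum_le (aux_cs_summable ha hc h2a h2c) (fun s => ?_)
  have hCS := Finset.sum_mul_sq_le_sq_mul_sq s a c
  have hA : ∑ i ∈ s, a i ^ 2 ≤ ∑' n, a n ^ 2 :=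
    h2a.sum_le_tsum s (fun i _ => sq_nonneg _)
  have hB : ∑ i ∈ s, c i ^ 2 ≤ ∑' n, c n ^ 2 :=
    h2c.sum_le_tsum s (fun i _ => sq_nonneg _)
  have hAn : (0:ℝ) ≤ ∑ i ∈ s, a i ^ 2 := Finset.sum_nonneg (fun i _ => sq_nonneg _)
  have hBn : (0:ℝ) ≤ ∑ i ∈ s, c i ^ 2 := Finset.sum_nonneg (fun i _ => sq_nonneg _)
  calc ∑ i ∈ s, a i * c i ≤ |∑ i ∈ s, a i * c i| := le_abs_self _
    _ = Real.sqrt ((∑ i ∈ s, a i * c i) ^ 2) := (Real.sqrt_sq_eq_abs _).symm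
    _ ≤ Real.sqrt ((∑ i ∈ s, a i ^ 2) * ∑ i ∈ s, c i ^ 2) := Real.sqrt_le_sqrt hCS
    _ = Real.sqrt (∑ i ∈ s, a i ^ 2) * Real.sqrt (∑ i ∈ s, c i ^ 2) := Real.sqrt_mul hAn _
    _ ≤ Real.sqrt (∑' n, a n ^ 2) * Real.sqrt (∑' n, c n ^ 2) := by
        exact mul_le_mul (Real.sqrt_le_sqrt hA) (Real.sqrt_le_sqrt hB)
          (Real.sqrt_nonneg _) (Real.sqrt_nonneg _)

theorem stmt_10 (p k : ℝ) (hp0 : 0 ≤ p) (hp1 : p < 1) (hk0 : 0 ≤ k) (hk1 : k < 1)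
    (f : ℂ → ℂ) (b : ℕ → ℂ)
    (hfdiff : DifferentiableOn ℂ f (ball (0 : ℂ) 1 \ {(p : ℂ)}))
    (hf : ∀ z ∈ ball (0 : ℂ) 1, z ≠ (p : ℂ) →
      f z = 1 / (z - p) + ∑' n : ℕ, b n * z ^ n)
    (hb : Summable (fun n : ℕ => (n : ℝ) * ‖b n‖ ^ 2))
    (hbound : ∑' n : ℕ, (n : ℝ) * ‖b n‖ ^ 2 ≤ k ^ 2 / (1 - p ^ 2) ^ 2) :
    ∀ z ∈ ball (0 : ℂ) 1, z ≠ (p : ℂ) →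
      ‖deriv f z + 1 / (z - p) ^ 2‖ ≤ k / ((1 - p ^ 2) * (1 - ‖z‖ ^ 2)) := by
  -- coefficient bound
  set T : ℝ := ∑' n : ℕ, (n : ℝ) * ‖b n‖ ^ 2 with hT
  set M : ℝ := max ‖b 0‖ (Real.sqrt T) with hMdef
  have hTnn : 0 ≤ T := tsum_nonneg (fun n => mul_nonneg (Nat.cast_nonneg n) (sq_nonneg _))
  have hM : ∀ n, ‖b n‖ ≤ M := by
    intro n
    match n with
    | 0 => exact le_max_left _ _
    | (m+1) =>
      refine le_trans ?_ (le_max_right _ _)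
      have h1 : ‖b (m+1)‖ ^ 2 ≤ T := by
        refine le_trans ?_ (hb.le_tsum (m+1) (fun j _ => mul_nonneg (Nat.cast_nonneg j) (sq_nonneg _)))
        have : (1:ℝ) ≤ ((m+1 : ℕ) : ℝ) := by exact_mod_cast Nat.one_le_iff_ne_zero.2 (Nat.succ_ne_zero m)
        nlinarith [sq_nonneg ‖b (m+1)‖]
      calc ‖b (m+1)‖ = Real.sqrt (‖b (m+1)‖ ^ 2) := (Real.sqrt_sq (norm_nonneg _)).symm
        _ ≤ Real.sqrt T := Real.sqrt_le_sqrt h1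
  -- derivative of the power series part
  set h : ℂ → ℂ := fun w => ∑' n : ℕ, b n * w ^ n with hhdef
  have key : ∀ y : ℂ, ‖y‖ < 1 →
      HasDerivAt h (∑' n : ℕ, b n * ((n : ℂ) * y ^ (n - 1))) y := by
    intro y hy
    set r : ℝ := (‖y‖ + 1) / 2 with hrdef
    have hr0 : 0 < r := by positivity
    have hyr : ‖y‖ < r := by rw [hrdef]; linarith
    have hr1 : r < 1 := by rw [hrdef]; linarith
    have habs : |r| < 1 := by rw [abs_of_nonneg hr0.le]; exact hr1
    have hMnn : 0 ≤ M := le_trans (norm_nonneg _) (hM 0)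
    refine hasDerivAt_tsum_of_isPreconnected
      (t := ball (0:ℂ) r) (y₀ := (0:ℂ))
      (u := fun n : ℕ => M * ((n : ℝ) * r ^ (n - 1)))
      (g := fun n w => b n * w ^ n) (g' := fun n w => b n * ((n : ℂ) * w ^ (n - 1)))
      ((aux_summable habs).mul_left M) isOpen_ball (convex_ball _ _).isPreconnected
      (fun n w _ => (hasDerivAt_pow n w).const_mul (b n)) (fun n w hw => ?_)
      (mem_ball_self hr0) ?_ ?_
    · have hwr : ‖w‖ ≤ r := by
        have := mem_ball_zero_iff.1 hw; exact this.le
      have : ‖b n * ((n : ℂ) * w ^ (n - 1))‖ = ‖b n‖ * ((n : ℝ) * ‖w‖ ^ (n - 1)) := by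
        simp [norm_mul, norm_pow]
      rw [this]
      refine mul_le_mul (hM n) ?_ (by positivity) hMnn
      exact mul_le_mul_of_nonneg_left (pow_le_pow_left₀ (norm_nonneg _) hwr _) (Nat.cast_nonneg n)
    · refine summable_of_ne_finset_zero (s := {0}) (fun n hn => ?_)
      have hn0 : n ≠ 0 := by simpa using hn
      simp [zero_pow hn0]
    · exact mem_ball_zero_iff.2 hyr
  intro z hz hzp
  have hz1 : ‖z‖ < 1 := mem_ball_zero_iff.1 hz
  have hzpne : z - (p : ℂ) ≠ 0 := sub_ne_zero.2 hzp
  -- compute deriv f z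
  have hd1 : HasDerivAt (fun w : ℂ => 1 / (w - p)) (-(1 / (z - p) ^ 2)) z := by
    have h1 : HasDerivAt (fun w : ℂ => w - p) 1 z := (hasDerivAt_id z).sub_const _
    have h2 := h1.inv hzpne
    simpa [one_div, neg_div, Pi.inv_def] using h2
  have hdh := key z hz1
  have hdF : HasDerivAt (fun w : ℂ => 1 / (w - p) + h w)
      (-(1 / (z - p) ^ 2) + ∑' n : ℕ, b n * ((n : ℂ) * z ^ (n - 1))) z := hd1.add hdh
  have hopen : IsOpen (ball (0 : ℂ) 1 \ {(p : ℂ)}) := isOpen_ball.sdiff isClosed_singleton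
  have hmem : z ∈ ball (0 : ℂ) 1 \ {(p : ℂ)} := ⟨hz, hzp⟩
  have hev : f =ᶠ[nhds z] (fun w : ℂ => 1 / (w - p) + h w) :=
    Filter.eventuallyEq_of_mem (hopen.mem_nhds hmem) (fun w hw => hf w hw.1 hw.2)
  have hderiv : deriv f z = -(1 / (z - p) ^ 2) + ∑' n : ℕ, b n * ((n : ℂ) * z ^ (n - 1)) := by
    rw [hev.deriv_eq]; exact hdF.deriv
  have hkey : deriv f z + 1 / (z - p) ^ 2 = ∑' n : ℕ, b n * ((n : ℂ) * z ^ (n - 1)) := by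
    rw [hderiv]; ring
  rw [hkey]
  -- Cauchy–Schwarz bound
  set a : ℕ → ℝ := fun n => Real.sqrt n * ‖b n‖ with hadef
  set c : ℕ → ℝ := fun n => Real.sqrt n * ‖z‖ ^ (n - 1) with hcdef
  have hzn : (0:ℝ) ≤ ‖z‖ := norm_nonneg _
  have hs0 : (0:ℝ) ≤ ‖z‖ ^ 2 := sq_nonneg _
  have hs1 : ‖z‖ ^ 2 < 1 := by nlinarith
  have hnormeq : ∀ n : ℕ, ‖b n * ((n : ℂ) * z ^ (n - 1))‖ = a n * c n := by
    intro n
    have : ‖b n * ((n : ℂ) * z ^ (n - 1))‖ = ‖b n‖ * ((n : ℝ) * ‖z‖ ^ (n - 1)) := by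
      simp [norm_mul, norm_pow]
    rw [this, hadef, hcdef]
    have hsq : Real.sqrt n * Real.sqrt n = (n : ℝ) := Real.mul_self_sqrt (Nat.cast_nonneg n)
    ring_nf
    rw [Real.sq_sqrt (Nat.cast_nonneg n)]
    ring
  have h2a : Summable (fun n => a n ^ 2) := by
    refine hb.congr (fun n => ?_)
    rw [hadef]; rw [mul_pow, Real.sq_sqrt (Nat.cast_nonneg n)]
  have h2c : Summable (fun n => c n ^ 2) := by
    have hsum := aux_summable (r := ‖z‖ ^ 2) (by rw [abs_of_nonneg hs0]; exact hs1)
    refine hsum.congr (fun n => ?_)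
    rw [hcdef]
    simp only [mul_pow, Real.sq_sqrt (Nat.cast_nonneg n), ← pow_mul]
    ring_nf
  have ha : ∀ n, 0 ≤ a n := fun n => mul_nonneg (Real.sqrt_nonneg _) (norm_nonneg _)
  have hc : ∀ n, 0 ≤ c n := fun n => mul_nonneg (Real.sqrt_nonneg _) (by positivity)
  have hsumnorm : Summable (fun n : ℕ => ‖b n * ((n : ℂ) * z ^ (n - 1))‖) := by
    refine (aux_cs_summable ha hc h2a h2c).congr (fun n => (hnormeq n).symm)
  have hbnd1 : ‖∑' n : ℕ, b n * ((n : ℂ) * z ^ (n - 1))‖ ≤ ∑' n, a n * c n := by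
    refine le_trans (norm_tsum_le_tsum_norm hsumnorm) (le_of_eq ?_)
    exact tsum_congr hnormeq
  have hcs := aux_cs_tsum ha hc h2a h2c
  -- compute the two tsums
  have hA : ∑' n, a n ^ 2 = T := by
    refine tsum_congr (fun n => ?_)
    rw [hadef, mul_pow, Real.sq_sqrt (Nat.cast_nonneg n)]
  have hC : ∑' n, c n ^ 2 = 1 / (1 - ‖z‖ ^ 2) ^ 2 := by
    rw [← aux_tsum hs0 hs1]
    refine tsum_congr (fun n => ?_)
    rw [hcdef]
    simp only [mul_pow, Real.sq_sqrt (Nat.cast_nonneg n), ← pow_mul]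
    ring_nf
  have hp2 : 0 < 1 - p ^ 2 := by nlinarith
  have hz2 : 0 < 1 - ‖z‖ ^ 2 := by linarith
  have hsqA : Real.sqrt (∑' n, a n ^ 2) ≤ k / (1 - p ^ 2) := by
    rw [hA]
    calc Real.sqrt T ≤ Real.sqrt (k ^ 2 / (1 - p ^ 2) ^ 2) := Real.sqrt_le_sqrt hbound
      _ = k / (1 - p ^ 2) := by
          rw [← div_pow, Real.sqrt_sq (by positivity)]
  have hsqC : Real.sqrt (∑' n, c n ^ 2) = 1 / (1 - ‖z‖ ^ 2) := by
    rw [hC, show (1:ℝ)/(1 - ‖z‖ ^ 2) ^ 2 = ((1:ℝ)/(1 - ‖z‖ ^ 2)) ^ 2 by rw [one_div, one_div, ← inv_pow],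
      Real.sqrt_sq (by positivity)]
  calc ‖∑' n : ℕ, b n * ((n : ℂ) * z ^ (n - 1))‖
      ≤ ∑' n, a n * c n := hbnd1
    _ ≤ Real.sqrt (∑' n, a n ^ 2) * Real.sqrt (∑' n, c n ^ 2) := hcs
    _ ≤ (k / (1 - p ^ 2)) * (1 / (1 - ‖z‖ ^ 2)) := by
        rw [hsqC]
        exact mul_le_mul_of_nonneg_right hsqA (by positivity)
    _ = k / ((1 - p ^ 2) * (1 - ‖z‖ ^ 2)) := by
        field_simp
end

section
/- Let 0 ≤ p < 1 and n ≥ 1. Then (1/π)∬_𝔻 |ζ|^{n-1}/|1-pζ|² dξ dη = 2·∑_{m=0}^∞ p^{2m}/(n+2m+1), where ζ = ξ + iη. -/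
open MeasureTheory Metric Set
open scoped Real ENNReal NNReal


theorem term_integral (n j k : ℕ) (hn : 1 ≤ n) :
    (∫ ζ in ball (0:ℂ) 1, ‖ζ‖ ^ (n-1) * (ζ^j * (starRingEnd ℂ ζ)^k).re)
      = if j = k then 2*π / ((n:ℝ) + 2*j + 1) else 0 := by
  set h : ℂ → ℝ := fun ζ => ‖ζ‖ ^ (n-1) * (ζ^j * (starRingEnd ℂ ζ)^k).re with hh
  have hmeas : MeasurableSet (Ioo (0:ℝ) 1 ×ˢ Ioo (-π) π) :=
    measurableSet_Ioo.prod measurableSet_Ioo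
  have polar : ∫ ζ in ball (0:ℂ) 1, h ζ
      = ∫ q in Ioo (0:ℝ) 1 ×ˢ Ioo (-π) π, q.1 • h (Complex.polarCoord.symm q) := by
    rw [← integral_indicator measurableSet_ball, ← Complex.integral_comp_polarCoord_symm]
    have htar : polarCoord.target = Ioi (0:ℝ) ×ˢ Ioo (-π) π := polarCoord_target
    rw [htar]
    have hcong : ∀ q ∈ Ioi (0:ℝ) ×ˢ Ioo (-π) π,
        q.1 • (Set.indicator (ball (0:ℂ) 1) h) (Complex.polarCoord.symm q)
          = Set.indicator (Ioo (0:ℝ) 1 ×ˢ Ioo (-π) π)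
              (fun q => q.1 • h (Complex.polarCoord.symm q)) q := by
      rintro ⟨r, θ⟩ ⟨hr, hθ⟩
      have habs : ‖Complex.polarCoord.symm (r, θ)‖ = r := by
        rw [Complex.norm_polarCoord_symm]; exact abs_of_pos hr
      by_cases h1 : r < 1
      · rw [Set.indicator_of_mem, Set.indicator_of_mem]
        · exact ⟨⟨hr, h1⟩, hθ⟩
        · simp only [mem_ball, Complex.dist_eq, sub_zero, habs]; exact h1
      · rw [Set.indicator_of_notMem, Set.indicator_of_notMem, smul_zero]
        · rintro ⟨⟨_, h2⟩, _⟩; exact h1 h2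
        · simp only [mem_ball, Complex.dist_eq, sub_zero, habs]; exact h1
    rw [setIntegral_congr_fun (measurableSet_Ioi.prod measurableSet_Ioo) hcong,
      setIntegral_indicator hmeas,
      Set.inter_eq_right.mpr (Set.prod_mono_left Ioo_subset_Ioi_self)]
  have point : ∀ q ∈ Ioo (0:ℝ) 1 ×ˢ Ioo (-π) π,
      q.1 • h (Complex.polarCoord.symm q)
        = (fun r => r ^ (n + j + k)) q.1 *
            (fun θ => Real.cos (((j:ℝ) - (k:ℝ)) * θ)) q.2 := by
    rintro ⟨r, θ⟩ ⟨⟨hr, _⟩, _⟩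
    simp only
    have hζ : Complex.polarCoord.symm (r, θ) = (r:ℂ) * Complex.exp (θ * Complex.I) := by
      rw [Complex.polarCoord_symm_apply, Complex.exp_mul_I]
      push_cast; ring
    have hnorm : ‖Complex.polarCoord.symm (r, θ)‖ = r := by
      rw [Complex.norm_polarCoord_symm, abs_of_pos hr]
    have hconj : (starRingEnd ℂ) (Complex.polarCoord.symm (r, θ))
        = (r:ℂ) * Complex.exp (-θ * Complex.I) := by
      rw [hζ, map_mul, Complex.conj_ofReal, ← Complex.exp_conj]
      congr 1
      simp [Complex.conj_I]
    simp only [hh, smul_eq_mul]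
    rw [hnorm, hconj, hζ]
    rw [mul_pow, mul_pow, ← Complex.exp_nat_mul, ← Complex.exp_nat_mul]
    have e1 : Complex.exp (j * (θ * Complex.I)) * Complex.exp (k * (-θ * Complex.I))
        = Complex.exp ((((j:ℝ) - k) * θ : ℝ) * Complex.I) := by
      rw [← Complex.exp_add]; congr 1; push_cast; ring
    have hre : ((r:ℂ)^j * Complex.exp (j * (θ * Complex.I)) *
        ((r:ℂ)^k * Complex.exp (k * (-θ * Complex.I)))).re
        = r ^ (j+k) * Real.cos (((j:ℝ) - k) * θ) := by
      rw [mul_mul_mul_comm, e1,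
        show ((r:ℂ)^j * (r:ℂ)^k) = ((r ^ (j+k) : ℝ):ℂ) from by push_cast; ring]
      rw [Complex.re_ofReal_mul, Complex.exp_ofReal_mul_I_re]
    rw [hre, show n + j + k = 1 + (n-1) + (j+k) from by omega]
    ring
  rw [polar, setIntegral_congr_fun hmeas point, Measure.volume_eq_prod ℝ ℝ,
    setIntegral_prod_mul (fun r : ℝ => r ^ (n + j + k))
      (fun θ : ℝ => Real.cos (((j:ℝ) - (k:ℝ)) * θ)) (Ioo (0:ℝ) 1) (Ioo (-π) π)]
  have hrad : (∫ r in Ioo (0:ℝ) 1, r ^ (n + j + k)) = 1 / ((n:ℝ) + j + k + 1) := by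
    rw [← integral_Ioc_eq_integral_Ioo, ← intervalIntegral.integral_of_le zero_le_one,
      integral_pow]
    push_cast; simp
  rw [hrad]
  by_cases hjk : j = k
  · subst hjk
    simp only [sub_self, zero_mul, Real.cos_zero, if_pos rfl]
    rw [integral_const, smul_eq_mul, mul_one, measureReal_restrict_apply_univ, Real.volume_real_Ioo,
      max_eq_left (by linarith [Real.pi_pos])]
    push_cast
    have : (n:ℝ) + j + j + 1 ≠ 0 := by positivity
    field_simp
    ring
  · have hc : ((j:ℝ) - k) ≠ 0 := by
      intro hc; apply hjk
      exact_mod_cast sub_eq_zero.mp hc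
    have hang : (∫ θ in Ioo (-π) π, Real.cos (((j:ℝ) - k) * θ)) = 0 := by
      rw [← integral_Ioc_eq_integral_Ioo,
        ← intervalIntegral.integral_of_le (by linarith [Real.pi_pos] : -π ≤ π),
        intervalIntegral.integral_comp_mul_left (fun x => Real.cos x) hc]
      have hsin : Real.sin (((j:ℝ) - k) * π) = 0 := by
        rw [show ((j:ℝ) - k) = (((j:ℤ) - k : ℤ) : ℝ) from by push_cast; ring]
        exact Real.sin_int_mul_pi _
      simp [integral_cos, mul_neg, Real.sin_neg, hsin]
    rw [hang, if_neg hjk, mul_zero]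

theorem pointwise_series (p : ℝ) (hp0 : 0 ≤ p) (hp1 : p < 1) (ζ : ℂ) (hζ : ‖ζ‖ < 1) :
    ((‖1 - (p:ℂ) * ζ‖ : ℝ) ^ 2)⁻¹
      = ∑' x : ℕ × ℕ, p ^ (x.1 + x.2) * (ζ ^ x.1 * (starRingEnd ℂ ζ) ^ x.2).re := by
  set w : ℂ := (p:ℂ) * ζ with hwdef
  have hw : ‖w‖ < 1 := by
    rw [hwdef, norm_mul, Complex.norm_real, Real.norm_eq_abs, abs_of_nonneg hp0]
    exact lt_of_le_of_lt (mul_le_of_le_one_right hp0 hζ.le) hp1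
  have hw' : ‖(starRingEnd ℂ) w‖ < 1 := by rwa [RCLike.norm_conj]
  have hn1 : Summable fun m : ℕ => ‖w ^ m‖ := by
    simpa [norm_pow] using summable_geometric_of_lt_one (norm_nonneg w) hw
  have hn2 : Summable fun m : ℕ => ‖((starRingEnd ℂ) w) ^ m‖ := by
    simpa [norm_pow] using summable_geometric_of_lt_one (norm_nonneg _) hw'
  have hsum : Summable fun x : ℕ × ℕ => w ^ x.1 * ((starRingEnd ℂ) w) ^ x.2 :=
    summable_mul_of_summable_norm hn1 hn2
  have key : (∑' x : ℕ × ℕ, w ^ x.1 * ((starRingEnd ℂ) w) ^ x.2)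
      = (1 - w)⁻¹ * (1 - (starRingEnd ℂ) w)⁻¹ := by
    rw [← tsum_mul_tsum_of_summable_norm hn1 hn2, tsum_geometric_of_norm_lt_one hw,
      tsum_geometric_of_norm_lt_one hw']
  have key2 : (1 - w)⁻¹ * (1 - (starRingEnd ℂ) w)⁻¹
      = (((‖1 - w‖ : ℝ) ^ 2 : ℝ) : ℂ)⁻¹ := by
    rw [show (1 : ℂ) - (starRingEnd ℂ) w = (starRingEnd ℂ) (1 - w) from by
        rw [map_sub, map_one],
      ← mul_inv, Complex.mul_conj, Complex.normSq_eq_norm_sq]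
  have hre : ((((‖1 - w‖ : ℝ) ^ 2 : ℝ) : ℂ)⁻¹).re = ((‖1 - w‖ : ℝ) ^ 2)⁻¹ := by
    rw [← Complex.ofReal_inv, Complex.ofReal_re]
  calc ((‖1 - w‖ : ℝ) ^ 2)⁻¹
      = ((∑' x : ℕ × ℕ, w ^ x.1 * ((starRingEnd ℂ) w) ^ x.2)).re := by
        rw [key, key2, hre]
    _ = ∑' x : ℕ × ℕ, (w ^ x.1 * ((starRingEnd ℂ) w) ^ x.2).re := Complex.re_tsum hsum
    _ = ∑' x : ℕ × ℕ, p ^ (x.1 + x.2) * (ζ ^ x.1 * (starRingEnd ℂ ζ) ^ x.2).re := by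
        refine tsum_congr fun x => ?_
        rw [show w ^ x.1 * ((starRingEnd ℂ) w) ^ x.2
            = ((p ^ (x.1 + x.2) : ℝ) : ℂ) * (ζ ^ x.1 * (starRingEnd ℂ ζ) ^ x.2) from by
          rw [hwdef, map_mul, Complex.conj_ofReal]; push_cast; ring,
          Complex.re_ofReal_mul]

theorem stmt_12 (p : ℝ) (hp0 : 0 ≤ p) (hp1 : p < 1) (n : ℕ) (hn : 1 ≤ n) :
    (1 / π) * ∫ ζ in ball (0 : ℂ) 1, ‖ζ‖ ^ (n - 1) / ‖1 - p * ζ‖ ^ 2 =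
      2 * ∑' m : ℕ, p ^ (2 * m) / (n + 2 * m + 1) := by
  set F : ℕ × ℕ → ℂ → ℝ := fun x ζ =>
    p ^ (x.1 + x.2) * (‖ζ‖ ^ (n - 1) * (ζ ^ x.1 * (starRingEnd ℂ ζ) ^ x.2).re) with hF
  have hgeo : Summable fun m : ℕ => ‖p ^ m‖ := by
    simpa [abs_of_nonneg hp0] using summable_geometric_of_lt_one hp0 hp1
  have hpgeo : Summable fun x : ℕ × ℕ => p ^ x.1 * p ^ x.2 :=
    summable_mul_of_summable_norm hgeo hgeo
  -- pointwise identity on the ball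
  have hpt : ∀ ζ ∈ ball (0 : ℂ) 1,
      ‖ζ‖ ^ (n - 1) / ‖1 - (p:ℂ) * ζ‖ ^ 2 = ∑' x : ℕ × ℕ, F x ζ := by
    intro ζ hζ
    rw [mem_ball, Complex.dist_eq, sub_zero] at hζ
    rw [div_eq_mul_inv, pointwise_series p hp0 hp1 ζ hζ, ← tsum_mul_left]
    exact tsum_congr fun x => by ring
  -- measurability of terms
  have hFc : ∀ x : ℕ × ℕ, Continuous (F x) := by
    intro x
    apply Continuous.mul continuous_const
    exact (continuous_norm.pow _).mul
      (Complex.continuous_re.comp ((continuous_pow x.1).mul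
        ((Complex.continuous_conj.pow x.2))))
  have hFm : ∀ x : ℕ × ℕ, AEStronglyMeasurable (F x)
      ((volume : Measure ℂ).restrict (ball 0 1)) :=
    fun x => (hFc x).aestronglyMeasurable
  -- the lintegral bound for the sum-integral swap
  have hbound : ∀ x : ℕ × ℕ, ∫⁻ ζ in ball (0:ℂ) 1, ‖F x ζ‖₊
      ≤ ENNReal.ofReal (p ^ x.1 * p ^ x.2) * volume (ball (0:ℂ) 1) := by
    intro x
    have hb : ∀ ζ ∈ ball (0:ℂ) 1, (‖F x ζ‖₊ : ℝ≥0∞) ≤ ENNReal.ofReal (p ^ x.1 * p ^ x.2) := by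
      intro ζ hζ
      rw [mem_ball, Complex.dist_eq, sub_zero] at hζ
      rw [show (‖F x ζ‖₊ : ℝ≥0∞) = ENNReal.ofReal ‖F x ζ‖ from (ofReal_norm _).symm]
      apply ENNReal.ofReal_le_ofReal
      have h1 : ‖ζ‖ ^ (n - 1) ≤ 1 := pow_le_one₀ (norm_nonneg _) hζ.le
      have h2 : |(ζ ^ x.1 * (starRingEnd ℂ ζ) ^ x.2).re| ≤ 1 := by
        refine le_trans (Complex.abs_re_le_norm _) ?_
        rw [norm_mul, norm_pow, norm_pow, RCLike.norm_conj]
        exact mul_le_one₀ (pow_le_one₀ (norm_nonneg _) hζ.le) (by positivity)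
          (pow_le_one₀ (norm_nonneg _) hζ.le)
      have hp' : (0:ℝ) ≤ p ^ x.1 * p ^ x.2 := by positivity
      rw [hF]
      simp only [Real.norm_eq_abs, abs_mul]
      rw [abs_of_nonneg (pow_nonneg hp0 _),
        abs_of_nonneg (pow_nonneg (norm_nonneg ζ) _), pow_add]
      calc p ^ x.1 * p ^ x.2 * (‖ζ‖ ^ (n-1) * |(ζ ^ x.1 * (starRingEnd ℂ ζ) ^ x.2).re|)
          ≤ p ^ x.1 * p ^ x.2 * (1 * 1) := by
            apply mul_le_mul_of_nonneg_left _ hp'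
            exact mul_le_mul h1 h2 (abs_nonneg _) zero_le_one
        _ = p ^ x.1 * p ^ x.2 := by ring
    calc ∫⁻ ζ in ball (0:ℂ) 1, ‖F x ζ‖₊
        ≤ ∫⁻ _ in ball (0:ℂ) 1, ENNReal.ofReal (p ^ x.1 * p ^ x.2) := by
          apply lintegral_mono_ae
          exact (ae_restrict_iff' measurableSet_ball).mpr (Filter.Eventually.of_forall hb)
      _ = ENNReal.ofReal (p ^ x.1 * p ^ x.2) * volume (ball (0:ℂ) 1) := by
          rw [setLIntegral_const]
  have hswap : ∑' x : ℕ × ℕ, ∫⁻ ζ in ball (0:ℂ) 1, ‖F x ζ‖₊ ≠ ⊤ := by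
    refine ne_top_of_le_ne_top ?_ (ENNReal.tsum_le_tsum hbound)
    rw [ENNReal.tsum_mul_right]
    exact ENNReal.mul_ne_top
      (by rw [← ENNReal.ofReal_tsum_of_nonneg (fun x => by positivity) hpgeo]
          exact ENNReal.ofReal_ne_top)
      measure_ball_lt_top.ne
  -- the diagonal sum
  have hdiag : ∀ x : ℕ × ℕ, (∫ ζ in ball (0:ℂ) 1, F x ζ)
      = if x.1 = x.2 then 2 * π * (p ^ (2 * x.1) / ((n:ℝ) + 2 * x.1 + 1)) else 0 := by
    intro x
    rw [hF]
    simp only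
    rw [integral_const_mul, term_integral n x.1 x.2 hn]
    by_cases hx : x.1 = x.2
    · rw [if_pos hx, if_pos hx, ← hx, two_mul x.1, pow_add]
      ring
    · rw [if_neg hx, if_neg hx, mul_zero]
  -- summability of diagonal values
  have hG : Summable fun x : ℕ × ℕ =>
      if x.1 = x.2 then 2 * π * (p ^ (2 * x.1) / ((n:ℝ) + 2 * x.1 + 1)) else 0 := by
    refine Summable.of_nonneg_of_le (fun x => ?_) (fun x => ?_) (hpgeo.mul_left (2 * π))
    · by_cases hx : x.1 = x.2
      · rw [if_pos hx]; positivity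
      · rw [if_neg hx]
    · by_cases hx : x.1 = x.2
      · rw [if_pos hx, ← hx]
        have h1 : (1:ℝ) ≤ (n:ℝ) + 2 * x.1 + 1 := by
          have ha := Nat.cast_nonneg (α := ℝ) n
          have hb := Nat.cast_nonneg (α := ℝ) x.1
          linarith
        have hd : p ^ (2 * x.1) / ((n:ℝ) + 2 * x.1 + 1) ≤ p ^ (2 * x.1) :=
          div_le_self (by positivity) h1
        calc 2 * π * (p ^ (2*x.1) / ((n:ℝ) + 2*x.1 + 1)) ≤ 2 * π * p ^ (2*x.1) := by
              apply mul_le_mul_of_nonneg_left hd (by positivity)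
          _ = 2 * π * (p ^ x.1 * p ^ x.1) := by rw [two_mul x.1, pow_add]
      · rw [if_neg hx]
        positivity
  have hmain : (∫ ζ in ball (0:ℂ) 1, ‖ζ‖ ^ (n - 1) / ‖1 - (p:ℂ) * ζ‖ ^ 2)
      = 2 * π * ∑' m : ℕ, p ^ (2 * m) / ((n:ℝ) + 2 * m + 1) := by
    rw [setIntegral_congr_fun measurableSet_ball hpt, integral_tsum hFm hswap]
    have hinner : ∀ j : ℕ, Summable fun k : ℕ =>
        if j = k then 2 * π * (p ^ (2 * j) / ((n:ℝ) + 2 * j + 1)) else 0 := by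
      intro j
      apply summable_of_finite_support
      apply Set.Finite.subset (Set.finite_singleton j)
      intro k hk
      simp only [Function.mem_support, ne_eq] at hk
      by_contra hkj
      exact hk (if_neg (fun h => hkj (by simp [Set.mem_singleton_iff, h])))
    rw [tsum_congr hdiag, Summable.tsum_prod' hG hinner]
    have : ∀ j : ℕ, (∑' k : ℕ, if j = k then
        2 * π * (p ^ (2 * j) / ((n:ℝ) + 2 * j + 1)) else 0)
        = 2 * π * (p ^ (2 * j) / ((n:ℝ) + 2 * j + 1)) := by
      intro j
      rw [show (fun k => if j = k then 2 * π * (p ^ (2*j) / ((n:ℝ) + 2*j + 1)) else 0)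
          = fun k => if k = j then 2 * π * (p ^ (2*j) / ((n:ℝ) + 2*j + 1)) else 0 from by
        funext k; simp [eq_comm]]
      exact tsum_ite_eq j _
    rw [tsum_congr this, tsum_mul_left]
  rw [hmain]
  have hπ : π ≠ 0 := Real.pi_ne_zero
  field_simp
end

section
/- Let z₀ ∈ 𝔻 \ {0}, 0 ≤ p < 1 with z₀ ≠ p, b₀ ∈ ℂ, and define f(z) = 1/(z-p) + b₀ - ((z₀^{-1} - z̄₀)/(1-p²))·((z̄₀-p)/(z₀-p))·(z̄₀z/(1 - z̄₀z)). Then |f′(z₀) + 1/(z₀-p)²| = 1/((1-p²)(1-|z₀|²)). -/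
open Metric

set_option maxHeartbeats 1000000

theorem stmt_19 (p : ℝ) (hp0 : 0 ≤ p) (hp1 : p < 1) (z₀ : ℂ)
    (hz₀ : z₀ ∈ ball (0 : ℂ) 1) (hz₀0 : z₀ ≠ 0) (hz₀p : z₀ ≠ (p : ℂ)) (b₀ : ℂ)
    (f : ℂ → ℂ)
    (hf : f = fun z => 1 / (z - p) + b₀ -
      ((z₀⁻¹ - (starRingEnd ℂ) z₀) / (1 - (p : ℂ) ^ 2)) *
        (((starRingEnd ℂ) z₀ - p) / (z₀ - p)) *
        ((starRingEnd ℂ) z₀ * z / (1 - (starRingEnd ℂ) z₀ * z))) :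
    ‖deriv f z₀ + 1 / (z₀ - p) ^ 2‖ = 1 / ((1 - p ^ 2) * (1 - ‖z₀‖ ^ 2)) := by
  subst hf
  set c : ℂ := (starRingEnd ℂ) z₀ with hc
  have hz1 : ‖z₀‖ < 1 := by simpa using hz₀
  have hn0 : (0:ℝ) ≤ ‖z₀‖ := norm_nonneg z₀
  have hnz : ‖z₀‖ ^ 2 < 1 := by nlinarith
  have hcz : c * z₀ = ((‖z₀‖ ^ 2 : ℝ) : ℂ) := by
    rw [hc, mul_comm, Complex.mul_conj']
    push_cast; ring
  have hs_eq : (1 : ℂ) - c * z₀ = ((1 - ‖z₀‖ ^ 2 : ℝ) : ℂ) := by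
    rw [hcz]; push_cast; ring
  have hs_ne : (1 : ℂ) - c * z₀ ≠ 0 := by
    rw [hs_eq]
    exact_mod_cast (by linarith : (1 - ‖z₀‖ ^ 2 : ℝ) ≠ 0)
  have hp2 : (1 : ℂ) - (p : ℂ) ^ 2 ≠ 0 := by
    have : (1 - p ^ 2 : ℝ) ≠ 0 := by nlinarith
    exact_mod_cast (by push_cast; exact_mod_cast sub_ne_zero.mpr (by nlinarith : (1:ℝ) ≠ p^2) : ((1 - p^2 : ℝ) : ℂ) ≠ 0)
  have hzp : z₀ - (p : ℂ) ≠ 0 := sub_ne_zero.mpr hz₀p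
  -- derivatives
  have h1 : HasDerivAt (fun z : ℂ => 1 / (z - (p : ℂ))) (-1 / (z₀ - p) ^ 2) z₀ := by
    have := ((hasDerivAt_id z₀).sub_const (p : ℂ)).inv hzp
    simp only [one_div]
    exact HasDerivAt.fun_inv ((hasDerivAt_id z₀).sub_const (p : ℂ)) hzp |>.congr_deriv (by simp)
  have hnum : HasDerivAt (fun z : ℂ => c * z) c z₀ := by
    simpa using (hasDerivAt_id z₀).const_mul c
  have hden : HasDerivAt (fun z : ℂ => 1 - c * z) (-c) z₀ := by
    simpa using hnum.const_sub 1
  have h2 : HasDerivAt (fun z : ℂ => c * z / (1 - c * z))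
      ((c * (1 - c * z₀) - c * z₀ * (-c)) / (1 - c * z₀) ^ 2) z₀ :=
    hnum.div hden hs_ne
  set C : ℂ := ((z₀⁻¹ - c) / (1 - (p : ℂ) ^ 2)) * ((c - p) / (z₀ - p)) with hC
  have hder : HasDerivAt (fun z : ℂ => 1 / (z - (p:ℂ)) + b₀ -
      C * (c * z / (1 - c * z)))
      (-1 / (z₀ - p) ^ 2 - C * ((c * (1 - c * z₀) - c * z₀ * (-c)) / (1 - c * z₀) ^ 2)) z₀ :=
    (h1.add_const b₀).sub (h2.const_mul C)
  rw [hder.deriv]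
  have hCD : C * ((c * (1 - c * z₀) - c * z₀ * (-c)) / (1 - c * z₀) ^ 2)
      = c * (c - p) / (z₀ * (z₀ - p) * ((1 - (p:ℂ) ^ 2) * (1 - c * z₀))) := by
    have hinv : z₀⁻¹ - c = (1 - c * z₀) / z₀ := by
      rw [eq_div_iff hz₀0, sub_mul, inv_mul_cancel₀ hz₀0]
    rw [hC, hinv, div_div, div_mul_div_comm, div_mul_div_comm,
      div_eq_div_iff (by
        exact mul_ne_zero (mul_ne_zero (mul_ne_zero hz₀0 hp2) hzp) (pow_ne_zero 2 hs_ne))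
        (mul_ne_zero (mul_ne_zero hz₀0 hzp) (mul_ne_zero hp2 hs_ne))]
    ring
  have key : -1 / (z₀ - p) ^ 2 -
      C * ((c * (1 - c * z₀) - c * z₀ * (-c)) / (1 - c * z₀) ^ 2) + 1 / (z₀ - p) ^ 2
      = -(c * (c - p) / (z₀ * (z₀ - p) * ((1 - (p:ℂ) ^ 2) * (1 - c * z₀)))) := by
    rw [← hCD]; ring
  rw [key]
  have hcp : ‖c - (p:ℂ)‖ = ‖z₀ - (p:ℂ)‖ := by
    rw [hc]
    rw [show (starRingEnd ℂ) z₀ - (p : ℂ) = (starRingEnd ℂ) (z₀ - p) by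
      simp [map_sub, Complex.conj_ofReal]]
    exact RCLike.norm_conj _
  have hnormp : ‖(1 : ℂ) - (p:ℂ)^2‖ = 1 - p ^ 2 := by
    rw [show (1 : ℂ) - (p:ℂ)^2 = ((1 - p^2 : ℝ) : ℂ) by push_cast; ring,
      Complex.norm_real]
    exact abs_of_pos (by nlinarith)
  have hnorms : ‖(1 : ℂ) - c * z₀‖ = 1 - ‖z₀‖ ^ 2 := by
    rw [hs_eq, Complex.norm_real]
    exact abs_of_pos (by linarith)
  rw [norm_neg, norm_div, norm_mul, norm_mul, norm_mul, norm_mul, hcp, hnormp, hnorms,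
    hc, RCLike.norm_conj]
  have h1' : ‖z₀‖ ≠ 0 := by
    simpa using norm_ne_zero_iff.mpr hz₀0
  have h2' : ‖z₀ - (p:ℂ)‖ ≠ 0 := by
    simpa using norm_ne_zero_iff.mpr hzp
  have hX1 : (1 - p ^ 2 : ℝ) ≠ 0 := by nlinarith
  have hX2 : (1 - ‖z₀‖ ^ 2 : ℝ) ≠ 0 := by
    simpa using (by linarith : (1 - ‖z₀‖ ^ 2 : ℝ) ≠ 0)
  field_simp
end
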